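/- Let M ≥ 1, 1 ≤ R ≤ M, σ_e² > 0, σ_ε² > 0, λ_1 ≥ … ≥ λ_R > 0 and ỹ ∈ ℝ^M. The function g(ν) = Σ_{j=1}^R ỹ_j² ν σ_e²/(λ_j² + 2νσ_e²) + (1/2) Σ_{m=R+1}^M ỹ_m² − (M/2)(Σ_{j=1}^R σ_e² ỹ_j² λ_j²/(λ_j² + 2νσ_e²)² + σ_ε²) + ν σ_ε² has derivative g'(ν) = Σ_{j=1}^R ỹ_j² λ_j² σ_e²/(λ_j² + 2νσ_e²)² + 2M Σ_{j=1}^R σ_e⁴ ỹ_j² λ_j²/(λ_j² + 2νσ_e²)³ + σ_ε², and g'(ν) > 0 for every ν > −λ_R²/(2σ_e²); consequently g is strictly increasing on the interval (−λ_R²/(2σ_e²), ∞). -/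

import Mathlib

/-- The scalar dual function
`g(ν) = ∑_{j=1}^R ỹ_j² ν σ_e²/(λ_j² + 2νσ_e²) + (1/2) ∑_{m=R+1}^M ỹ_m²
        − (M/2)(∑_{j=1}^R σ_e² ỹ_j² λ_j²/(λ_j² + 2νσ_e²)² + σ_ε²) + ν σ_ε²`. -/
noncomputable def gFun (M R : ℕ) (hRM : R ≤ M) (se seps : ℝ)
    (lam : Fin R → ℝ) (y : Fin M → ℝ) (ν : ℝ) : ℝ :=
  (∑ j : Fin R, (y (Fin.castLE hRM j)) ^ 2 * ν * se / ((lam j) ^ 2 + 2 * ν * se))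
    + (1/2) * (∑ m ∈ Finset.univ.filter (fun m : Fin M => R ≤ (m : ℕ)), (y m) ^ 2)
    - ((M : ℝ)/2) * ((∑ j : Fin R, se * (y (Fin.castLE hRM j)) ^ 2 * (lam j) ^ 2
        / ((lam j) ^ 2 + 2 * ν * se) ^ 2) + seps)
    + ν * seps

/-- The claimed derivative of `gFun`:
`g'(ν) = ∑_{j=1}^R ỹ_j² λ_j² σ_e²/(λ_j² + 2νσ_e²)²
        + 2M ∑_{j=1}^R σ_e⁴ ỹ_j² λ_j²/(λ_j² + 2νσ_e²)³ + σ_ε²`. -/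
noncomputable def gFun' (M R : ℕ) (hRM : R ≤ M) (se seps : ℝ)
    (lam : Fin R → ℝ) (y : Fin M → ℝ) (ν : ℝ) : ℝ :=
  (∑ j : Fin R, (y (Fin.castLE hRM j)) ^ 2 * (lam j) ^ 2 * se
      / ((lam j) ^ 2 + 2 * ν * se) ^ 2)
    + 2 * (M : ℝ) * (∑ j : Fin R, se ^ 2 * (y (Fin.castLE hRM j)) ^ 2 * (lam j) ^ 2
      / ((lam j) ^ 2 + 2 * ν * se) ^ 3)
    + seps

/-- **(Part of Proposition 2.)** On the interval `(−λ_R²/(2σ_e²), ∞)` the function `g`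
has derivative `g'`, the derivative is positive, and consequently `g` is strictly
increasing there. -/
theorem stmt_3 (M R : ℕ) (hM : 1 ≤ M) (hR : 1 ≤ R) (hRM : R ≤ M)
    (se seps : ℝ) (hse : 0 < se) (hseps : 0 < seps)
    (lam : Fin R → ℝ) (hlam : ∀ j, 0 < lam j)
    (hord : ∀ i j : Fin R, i ≤ j → lam j ≤ lam i)
    (y : Fin M → ℝ) :
    (∀ ν ∈ Set.Ioi (-(lam ⟨R - 1, by omega⟩) ^ 2 / (2 * se)),
        HasDerivAt (gFun M R hRM se seps lam y) (gFun' M R hRM se seps lam y ν) ν) ∧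
    (∀ ν ∈ Set.Ioi (-(lam ⟨R - 1, by omega⟩) ^ 2 / (2 * se)),
        0 < gFun' M R hRM se seps lam y ν) ∧
    StrictMonoOn (gFun M R hRM se seps lam y)
      (Set.Ioi (-(lam ⟨R - 1, by omega⟩) ^ 2 / (2 * se))) := by
  have hR1 : R - 1 < R := by omega
  set jR : Fin R := ⟨R - 1, hR1⟩ with hjR
  -- denominators positive
  have hden : ∀ ν ∈ Set.Ioi (-(lam jR) ^ 2 / (2 * se)), ∀ j : Fin R,
      0 < (lam j) ^ 2 + 2 * ν * se := by
    intro ν hν j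
    have hle : lam jR ≤ lam j := by
      apply hord j jR
      have := j.isLt
      simp [Fin.le_def, hjR]; omega
    have h2 : -(lam jR) ^ 2 < ν * (2 * se) := by
      rw [Set.mem_Ioi] at hν
      exact (div_lt_iff₀ (by positivity)).mp hν
    have h0 : 0 < lam jR := hlam jR
    nlinarith [hlam j]
  have hderiv : ∀ ν ∈ Set.Ioi (-(lam jR) ^ 2 / (2 * se)),
      HasDerivAt (gFun M R hRM se seps lam y) (gFun' M R hRM se seps lam y ν) ν := by
    intro ν hν
    have h1 : HasDerivAt (fun t : ℝ => ∑ j : Fin R,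
        (y (Fin.castLE hRM j)) ^ 2 * t * se / ((lam j) ^ 2 + 2 * t * se))
        (∑ j : Fin R,
          (y (Fin.castLE hRM j)) ^ 2 * (lam j) ^ 2 * se / ((lam j) ^ 2 + 2 * ν * se) ^ 2)
        ν := by
      apply HasDerivAt.fun_sum
      intro j _
      have hd := hden ν hν j
      have hd0 : (lam j) ^ 2 + 2 * ν * se ≠ 0 := ne_of_gt hd
      have hnum : HasDerivAt (fun t : ℝ => (y (Fin.castLE hRM j)) ^ 2 * t * se)
          ((y (Fin.castLE hRM j)) ^ 2 * se) ν := by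
        have := ((hasDerivAt_id ν).const_mul ((y (Fin.castLE hRM j)) ^ 2)).mul_const se
        simpa [mul_comm, mul_assoc, mul_left_comm] using this
      have hdenv : HasDerivAt (fun t : ℝ => (lam j) ^ 2 + 2 * t * se) (2 * se) ν := by
        have := (((hasDerivAt_id ν).const_mul 2).mul_const se).const_add ((lam j) ^ 2)
        simpa using this
      have := hnum.fun_div hdenv hd0
      convert this using 1
      · rfl
      field_simp
      ring
    have h3 : HasDerivAt (fun t : ℝ => ∑ j : Fin R,
        se * (y (Fin.castLE hRM j)) ^ 2 * (lam j) ^ 2 / ((lam j) ^ 2 + 2 * t * se) ^ 2)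
        (∑ j : Fin R,
          -(4 * (se ^ 2 * (y (Fin.castLE hRM j)) ^ 2 * (lam j) ^ 2
            / ((lam j) ^ 2 + 2 * ν * se) ^ 3))) ν := by
      apply HasDerivAt.fun_sum
      intro j _
      have hd := hden ν hν j
      have hd0 : (lam j) ^ 2 + 2 * ν * se ≠ 0 := ne_of_gt hd
      have hdenv : HasDerivAt (fun t : ℝ => (lam j) ^ 2 + 2 * t * se) (2 * se) ν := by
        have := (((hasDerivAt_id ν).const_mul 2).mul_const se).const_add ((lam j) ^ 2)
        simpa using this
      have hd2 : HasDerivAt (fun t : ℝ => ((lam j) ^ 2 + 2 * t * se) ^ 2)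
          (2 * ((lam j) ^ 2 + 2 * ν * se) ^ 1 * (2 * se)) ν := by
        simpa using hdenv.fun_pow 2
      have := (hasDerivAt_const ν
          (se * (y (Fin.castLE hRM j)) ^ 2 * (lam j) ^ 2)).fun_div hd2 (pow_ne_zero 2 hd0)
      convert this using 1
      · rfl
      field_simp
      ring
    have hfull := (((h1.add_const ((1/2) * (∑ m ∈ Finset.univ.filter
          (fun m : Fin M => R ≤ (m : ℕ)), (y m) ^ 2))).sub
        ((h3.add_const seps).const_mul ((M : ℝ)/2))).add
        ((hasDerivAt_id ν).mul_const seps))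
    have heq : gFun' M R hRM se seps lam y ν =
        (∑ j : Fin R,
          (y (Fin.castLE hRM j)) ^ 2 * (lam j) ^ 2 * se / ((lam j) ^ 2 + 2 * ν * se) ^ 2)
        - (M : ℝ)/2 * (∑ j : Fin R,
          -(4 * (se ^ 2 * (y (Fin.castLE hRM j)) ^ 2 * (lam j) ^ 2
            / ((lam j) ^ 2 + 2 * ν * se) ^ 3))) + 1 * seps := by
      have hS : (∑ j : Fin R,
          -(4 * (se ^ 2 * (y (Fin.castLE hRM j)) ^ 2 * (lam j) ^ 2
            / ((lam j) ^ 2 + 2 * ν * se) ^ 3)))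
          = (-4) * ∑ j : Fin R, se ^ 2 * (y (Fin.castLE hRM j)) ^ 2 * (lam j) ^ 2
            / ((lam j) ^ 2 + 2 * ν * se) ^ 3 := by
        rw [Finset.mul_sum]
        exact Finset.sum_congr rfl fun j _ => by ring
      rw [gFun', hS]
      ring
    rw [heq]
    exact hfull
  have hpos : ∀ ν ∈ Set.Ioi (-(lam jR) ^ 2 / (2 * se)),
      0 < gFun' M R hRM se seps lam y ν := by
    intro ν hν
    have h1 : 0 ≤ ∑ j : Fin R,
        (y (Fin.castLE hRM j)) ^ 2 * (lam j) ^ 2 * se / ((lam j) ^ 2 + 2 * ν * se) ^ 2 :=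
      Finset.sum_nonneg fun j _ => div_nonneg (by positivity) (pow_nonneg (hden ν hν j).le 2)
    have h2 : 0 ≤ ∑ j : Fin R,
        se ^ 2 * (y (Fin.castLE hRM j)) ^ 2 * (lam j) ^ 2
          / ((lam j) ^ 2 + 2 * ν * se) ^ 3 :=
      Finset.sum_nonneg fun j _ => div_nonneg (by positivity)
        (pow_nonneg (hden ν hν j).le 3)
    have : 0 ≤ 2 * (M : ℝ) := by positivity
    rw [gFun']
    nlinarith
  refine ⟨hderiv, hpos, ?_⟩
  apply strictMonoOn_of_deriv_pos (convex_Ioi _)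
  · exact fun x hx => (hderiv x hx).continuousAt.continuousWithinAt
  · intro x hx
    rw [interior_Ioi] at hx
    rw [(hderiv x hx).deriv]
    exact hpos x hx
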